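/- Let m ≥ 2 be an even integer and let A be a Hankel tensor of order m and dimension n whose Vandermonde rank r satisfies r ≤ n. Then the following statements are equivalent: (i) A is positive semi-definite; (ii) A is a complete Hankel tensor; (iii) A is an SOS tensor. -/

import Mathlib

open Finset

/-- `A x^m = ∑_{i_1,…,i_m} a_{i_1⋯i_m} x_{i_1}⋯x_{i_m}` for an order `m` dimension `n` tensor. -/
noncomputable def tApply (m n : ℕ) (a : (Fin m → Fin n) → ℝ) (x : Fin n → ℝ) : ℝ :=
  ∑ i : Fin m → Fin n, a i * ∏ j, x (i j)

/-- An (even order) tensor is positive semi-definite if `A x^m ≥ 0` for all `x`. -/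
def IsPSD (m n : ℕ) (a : (Fin m → Fin n) → ℝ) : Prop :=
  ∀ x : Fin n → ℝ, 0 ≤ tApply m n a x

/-- A tensor of even order `m` is an SOS tensor if the form `A x^m` is a finite sum of squares
of homogeneous polynomials of degree `m/2`. -/
def IsSOS (m n : ℕ) (a : (Fin m → Fin n) → ℝ) : Prop :=
  ∃ (r : ℕ) (p : Fin r → MvPolynomial (Fin n) ℝ),
    (∀ k, (p k).IsHomogeneous (m / 2)) ∧
    ∀ x : Fin n → ℝ, tApply m n a x = ∑ k, (MvPolynomial.eval x (p k)) ^ 2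

/-- A Vandermonde decomposition with `r` terms of an order `m` dimension `n` tensor:
`a = ∑_{k=1}^r α_k u_k^m` with `α_k ≠ 0` and `u_k = (1, μ_k, …, μ_k^{n-1})`
Vandermonde vectors with mutually distinct `μ_k`. -/
def HasVDecomp (m n : ℕ) (a : (Fin m → Fin n) → ℝ) (r : ℕ) : Prop :=
  ∃ (α : Fin r → ℝ) (μ : Fin r → ℝ), (∀ k, α k ≠ 0) ∧ Function.Injective μ ∧
    ∀ i : Fin m → Fin n, a i = ∑ k, α k * ∏ j, μ k ^ (i j : ℕ)

/-- A complete Hankel tensor: one admitting a Vandermonde decomposition with all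
coefficients positive. -/
def IsCompleteHankel (m n : ℕ) (a : (Fin m → Fin n) → ℝ) : Prop :=
  ∃ (r : ℕ) (α : Fin r → ℝ) (μ : Fin r → ℝ), (∀ k, 0 < α k) ∧ Function.Injective μ ∧
    ∀ i : Fin m → Fin n, a i = ∑ k, α k * ∏ j, μ k ^ (i j : ℕ)

lemma tApply_decomp (m n r : ℕ) (a : (Fin m → Fin n) → ℝ) (α μ : Fin r → ℝ)
    (h : ∀ i : Fin m → Fin n, a i = ∑ k, α k * ∏ j, μ k ^ (i j : ℕ)) (x : Fin n → ℝ) :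
    tApply m n a x = ∑ k, α k * (∑ t : Fin n, μ k ^ (t : ℕ) * x t) ^ m := by
  unfold tApply
  have : ∀ k : Fin r, (∑ t : Fin n, μ k ^ (t : ℕ) * x t) ^ m
      = ∑ i : Fin m → Fin n, ∏ j, (μ k ^ (i j : ℕ) * x (i j)) := by
    intro k
    rw [← Fin.prod_const m (∑ t : Fin n, μ k ^ (t : ℕ) * x t)]
    rw [Finset.prod_univ_sum (fun _ : Fin m => (univ : Finset (Fin n)))]
    simp [Fintype.piFinset_univ]
  simp_rw [this, h, Finset.sum_mul, Finset.mul_sum, Finset.prod_mul_distrib, mul_assoc]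
  rw [Finset.sum_comm]

/-- Theorem 4.2: for an even order Hankel tensor whose Vandermonde rank `r` satisfies
`r ≤ n`, positive semi-definiteness, being a complete Hankel tensor, and the SOS
property are equivalent. -/
theorem stmt_11 (m n r : ℕ) (hm : 2 ≤ m) (hme : Even m) (hn : 1 ≤ n)
    (a : (Fin m → Fin n) → ℝ)
    (hdec : HasVDecomp m n a r)
    (hmin : ∀ s : ℕ, HasVDecomp m n a s → r ≤ s)
    (hr : r ≤ n) :
    List.TFAE [IsPSD m n a, IsCompleteHankel m n a, IsSOS m n a] := by
  obtain ⟨α, μ, hα, hinj, hrep⟩ := hdec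
  tfae_have 1 → 2 := by
    intro hpsd
    refine ⟨r, α, μ, fun k0 => ?_, hinj, hrep⟩
    -- Lagrange interpolation: find x with ∑ μ_k^t x_t = δ_{k k0}
    set c : Fin r → ℝ := fun k => if k = k0 then 1 else 0 with hc
    have hinj' : Set.InjOn μ (univ : Finset (Fin r)) := fun a _ b _ h => hinj h
    set p : Polynomial ℝ := Lagrange.interpolate univ μ c with hp
    have hdeg : p.natDegree < n := by
      rcases eq_or_ne p 0 with h0 | h0
      · rw [h0, Polynomial.natDegree_zero]; omega
      · rw [Polynomial.natDegree_lt_iff_degree_lt h0]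
        calc p.degree < (univ : Finset (Fin r)).card := Lagrange.degree_interpolate_lt _ hinj'
        _ ≤ (n : WithBot ℕ) := by simpa using hr
    set x : Fin n → ℝ := fun t => p.coeff t with hx
    have heval : ∀ k : Fin r, ∑ t : Fin n, μ k ^ (t : ℕ) * x t = c k := by
      intro k
      calc ∑ t : Fin n, μ k ^ (t : ℕ) * x t = ∑ i ∈ range n, p.coeff i * μ k ^ i := by
            rw [← Fin.sum_univ_eq_sum_range]
            exact Finset.sum_congr rfl fun t _ => mul_comm _ _
        _ = Polynomial.eval (μ k) p := (Polynomial.eval_eq_sum_range' hdeg _).symm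
        _ = c k := Lagrange.eval_interpolate_at_node (v := μ) (r := c) hinj' (mem_univ k)
    have := hpsd x
    rw [tApply_decomp m n r a α μ hrep x] at this
    have hsum : ∑ k, α k * (∑ t : Fin n, μ k ^ (t : ℕ) * x t) ^ m = α k0 := by
      rw [Finset.sum_congr rfl fun k _ => by rw [heval k]]
      have hm0 : m ≠ 0 := by omega
      simp [hc, apply_ite (· ^ m), zero_pow hm0, ite_mul, Finset.sum_ite_eq']
    rw [hsum] at this
    exact lt_of_le_of_ne this (Ne.symm (hα k0))
  tfae_have 2 → 3 := by
    rintro ⟨s, β, ν, hβ, hνinj, hsrep⟩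
    refine ⟨s, fun k => MvPolynomial.C (Real.sqrt (β k)) *
        (∑ t : Fin n, MvPolynomial.C (ν k ^ (t : ℕ)) * MvPolynomial.X t) ^ (m / 2),
      fun k => ?_, fun x => ?_⟩
    · have hlin : (∑ t : Fin n, MvPolynomial.C (ν k ^ (t : ℕ)) * MvPolynomial.X t :
          MvPolynomial (Fin n) ℝ).IsHomogeneous 1 := by
        apply MvPolynomial.IsHomogeneous.sum
        intro t _
        simpa using (MvPolynomial.isHomogeneous_C (Fin n) (ν k ^ (t : ℕ))).mul
          (MvPolynomial.isHomogeneous_X ℝ t)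
      simpa using (MvPolynomial.isHomogeneous_C (Fin n) (Real.sqrt (β k))).mul (hlin.pow (m / 2))
    · rw [tApply_decomp m n s a β ν hsrep x]
      refine Finset.sum_congr rfl fun k _ => ?_
      simp only [map_mul, MvPolynomial.eval_C, map_pow, map_sum, MvPolynomial.eval_X]
      rw [mul_pow, ← pow_mul, Real.sq_sqrt (hβ k).le, Nat.div_mul_cancel hme.two_dvd]
  tfae_have 3 → 1 := by
    rintro ⟨s, p, _, hval⟩ x
    rw [hval x]
    exact Finset.sum_nonneg fun k _ => sq_nonneg _
  tfae_finish
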